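/- Let G be an amply regular graph with parameters (n, d, α, β) with α ≥ 1 and α = β − 1. Then for every edge xy, the Lin-Lu-Yau curvature satisfies κ(x, y) ≥ 2/d. -/

import Mathlib

open Finset SimpleGraph

variable {V : Type*} [Fintype V] [DecidableEq V]

/-- A graph is amply regular with parameters `(n, d, a, b)` if it is `d`-regular on `n`
vertices, adjacent vertices have exactly `a` common neighbors, and vertices at distance 2
have exactly `b` common neighbors. -/
def SimpleGraph.IsAmplyRegular (G : SimpleGraph V) [DecidableRel G.Adj]
    (n d a b : ℕ) : Prop :=
  Fintype.card V = n ∧ G.IsRegularOfDegree d ∧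
    (∀ x y, G.Adj x y → (G.neighborFinset x ∩ G.neighborFinset y).card = a) ∧
    (∀ x y, G.dist x y = 2 → (G.neighborFinset x ∩ G.neighborFinset y).card = b)

/-- The measure `μ_x^p` giving mass `p` to `x` and `(1-p)/deg x` to each neighbor of `x`. -/
noncomputable def muMeasure (G : SimpleGraph V) [DecidableRel G.Adj] (p : ℝ) (x : V) :
    V → ℝ :=
  fun v => if v = x then p else if G.Adj x v then (1 - p) / (G.degree x : ℝ) else 0

/-- `pi` is a transport plan between `mu1` and `mu2`. -/
def IsTransportPlan (mu1 mu2 : V → ℝ) (pi : V → V → ℝ) : Prop :=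
  (∀ u v, 0 ≤ pi u v) ∧ (∀ u, ∑ v, pi u v = mu1 u) ∧ (∀ v, ∑ u, pi u v = mu2 v)

/-- The 1-Wasserstein distance between two measures w.r.t. the graph distance. -/
noncomputable def W1 (G : SimpleGraph V) (mu1 mu2 : V → ℝ) : ℝ :=
  sInf {c : ℝ | ∃ pi, IsTransportPlan mu1 mu2 pi ∧
    c = ∑ u, ∑ v, (G.dist u v : ℝ) * pi u v}

/-- The Lin-Lu-Yau curvature of an edge of a `d`-regular graph, via the idleness
`p = 1/(d+1)` formula of Bourne et al. -/
noncomputable def kappaLLY (G : SimpleGraph V) [DecidableRel G.Adj] (d : ℕ) (x y : V) :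
    ℝ :=
  ((d + 1 : ℝ) / d) *
    (1 - W1 G (muMeasure G (1 / (d + 1 : ℝ)) x) (muMeasure G (1 / (d + 1 : ℝ)) y))

/-- `N_x = Γ(x) \ ({y} ∪ Γ(y))`. -/
def Nset (G : SimpleGraph V) [DecidableRel G.Adj] (x y : V) : Finset V :=
  G.neighborFinset x \ insert y (G.neighborFinset y)

/-- `Δ_{xy} = Γ(x) ∩ Γ(y)`. -/
def Dset (G : SimpleGraph V) [DecidableRel G.Adj] (x y : V) : Finset V :=
  G.neighborFinset x ∩ G.neighborFinset y

-- helpers (to be inserted after the pinned defs)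
section Helpers
variable {V : Type*} [Fintype V] [DecidableEq V]

lemma mem_Nset {G : SimpleGraph V} [DecidableRel G.Adj] {x y u : V} :
    u ∈ Nset G x y ↔ G.Adj x u ∧ u ≠ y ∧ ¬ G.Adj y u := by
  simp [Nset, not_or, and_assoc]

lemma mem_Dset {G : SimpleGraph V} [DecidableRel G.Adj] {x y u : V} :
    u ∈ Dset G x y ↔ G.Adj x u ∧ G.Adj y u := by
  simp [Dset]

lemma Dset_comm (G : SimpleGraph V) [DecidableRel G.Adj] (x y : V) :
    Dset G x y = Dset G y x := by
  simp [Dset, Finset.inter_comm]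

lemma part_x {G : SimpleGraph V} [DecidableRel G.Adj] {x y : V} (hxy : G.Adj x y) :
    G.neighborFinset x = insert y (Dset G x y ∪ Nset G x y) := by
  ext w
  simp only [mem_insert, mem_union, mem_Dset, mem_Nset, mem_neighborFinset]
  constructor
  · intro hw
    by_cases h1 : w = y
    · exact Or.inl h1
    · by_cases h2 : G.Adj y w
      · exact Or.inr (Or.inl ⟨hw, h2⟩)
      · exact Or.inr (Or.inr ⟨hw, h1, h2⟩)
  · rintro (rfl | ⟨hw, -⟩ | ⟨hw, -⟩) <;> first | exact hxy | exact hw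

lemma dist_two {G : SimpleGraph V} [DecidableRel G.Adj] {x y u : V}
    (hxu : G.Adj x u) (hxy : G.Adj x y) (hne : u ≠ y) (hnadj : ¬ G.Adj u y) :
    G.dist u y = 2 := by
  have hle : G.dist u y ≤ 2 := by
    simpa using G.dist_le (SimpleGraph.Walk.cons hxu.symm (SimpleGraph.Walk.cons hxy SimpleGraph.Walk.nil))
  have h0 : G.dist u y ≠ 0 := by
    rw [ne_eq, SimpleGraph.dist_eq_zero_iff_eq_or_not_reachable]
    push_neg
    exact ⟨hne, ⟨SimpleGraph.Walk.cons hxu.symm (SimpleGraph.Walk.cons hxy SimpleGraph.Walk.nil)⟩⟩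
  have h1 : G.dist u y ≠ 1 := by
    rw [ne_eq, SimpleGraph.dist_eq_one_iff_adj]
    exact hnadj
  omega

lemma card_inter_eq_sum {G : SimpleGraph V} [DecidableRel G.Adj] (s : Finset V) (u : V) :
    ((G.neighborFinset u ∩ s).card : ℝ) = ∑ z ∈ s, (if G.Adj u z then (1:ℝ) else 0) := by
  have h : ∀ z, (if G.Adj u z then (1:ℝ) else 0) = (if z ∈ G.neighborFinset u then (1:ℝ) else 0) := by
    intro z; simp [mem_neighborFinset]
  rw [Finset.sum_congr rfl (fun z _ => h z), Finset.sum_ite_mem]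
  simp [Finset.inter_comm]

lemma count_split {G : SimpleGraph V} [DecidableRel G.Adj] {x y u : V} {a : ℕ}
    (hxy : G.Adj x y) (hux : G.Adj u x)
    (hcup : (G.neighborFinset u ∩ G.neighborFinset y).card = a + 1) :
    (G.neighborFinset u ∩ Dset G x y).card + (G.neighborFinset u ∩ Nset G y x).card = a := by
  have hpart : G.neighborFinset y = insert x (Dset G y x ∪ Nset G y x) := part_x hxy.symm
  have hxmem : x ∈ G.neighborFinset u := by rw [mem_neighborFinset]; exact hux
  have hxnot : x ∉ Dset G y x ∪ Nset G y x := by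
    simp only [mem_union, mem_Dset, mem_Nset, not_or]
    refine ⟨fun h => G.irrefl h.2, fun h => h.2.1 rfl⟩
  have hdisj : Disjoint (G.neighborFinset u ∩ Dset G y x) (G.neighborFinset u ∩ Nset G y x) := by
    rw [Finset.disjoint_left]
    intro z hz1 hz2
    rw [mem_inter, mem_Dset] at hz1
    rw [mem_inter, mem_Nset] at hz2
    exact hz2.2.2.2 hz1.2.2
  rw [hpart, Finset.inter_insert_of_mem hxmem, Finset.inter_union_distrib_left,
    Finset.card_insert_of_notMem, Finset.card_union_of_disjoint hdisj] at hcup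
  · rw [Dset_comm] at hcup; omega
  · rw [Finset.mem_union, not_or]
    constructor <;> · rw [Finset.mem_inter]; rintro ⟨-, hm⟩; exact absurd hm (by
      first
      | (intro hm'; exact hxnot (Finset.mem_union_left _ hm'))
      | (intro hm'; exact hxnot (Finset.mem_union_right _ hm')))

lemma W1_le_cost {G : SimpleGraph V} {mu1 mu2 : V → ℝ} {q : V → V → ℝ}
    (hq : IsTransportPlan mu1 mu2 q) :
    W1 G mu1 mu2 ≤ ∑ u, ∑ v, (G.dist u v : ℝ) * q u v := by
  apply csInf_le
  · refine ⟨0, fun c hc => ?_⟩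
    obtain ⟨q', ⟨hq0, -, -⟩, rfl⟩ := hc
    apply Finset.sum_nonneg; intro u _
    apply Finset.sum_nonneg; intro v _
    exact mul_nonneg (Nat.cast_nonneg _) (hq0 u v)
  · exact ⟨q, hq, rfl⟩

end Helpers
set_option maxHeartbeats 1000000 in
/-- In an amply regular graph with `α ≥ 1` and `α = β - 1`, every edge has Lin-Lu-Yau
curvature at least `2/d`. -/
theorem stmt9 (G : SimpleGraph V) [DecidableRel G.Adj] {n d a b : ℕ}
    (h : G.IsAmplyRegular n d a b) (ha : 1 ≤ a) (hab : a = b - 1)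
    (x y : V) (hxy : G.Adj x y) :
    (2 : ℝ) / d ≤ kappaLLY G d x y := by
  classical
  obtain ⟨-, hreg, hA, hB⟩ := h
  have hb : b = a + 1 := by omega
  have hd0 : 0 < d := by
    rw [← hreg x]; exact (G.degree_pos_iff_exists_adj x).mpr ⟨y, hxy⟩
  have hdR : (0:ℝ) < d := by exact_mod_cast hd0
  have hd1R : (0:ℝ) < (d:ℝ) + 1 := by linarith
  have haR : (0:ℝ) < a := by exact_mod_cast ha
  set p : ℝ := 1 / ((d:ℝ) + 1) with hp
  have hp0 : 0 < p := by positivity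
  set Δ : Finset V := Dset G x y with hΔdef
  set Nx : Finset V := Nset G x y with hNxdef
  set Ny : Finset V := Nset G y x with hNydef
  set O : Finset V := insert x (insert y Δ) with hOdef
  have hΓx : G.neighborFinset x = insert y (Δ ∪ Nx) := part_x hxy
  have hΓy : G.neighborFinset y = insert x (Δ ∪ Ny) := by
    rw [part_x hxy.symm, ← Dset_comm]
  have hcΔ : Δ.card = a := hA x y hxy
  -- d = 1 + a + |Nx|
  have hynot : y ∉ Δ ∪ Nx := by
    simp only [mem_union, hΔdef, hNxdef, mem_Dset, mem_Nset, not_or]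
    exact ⟨fun hc => G.irrefl hc.2, fun hc => hc.2.1 rfl⟩
  have hdisjΔNx : Disjoint Δ Nx := by
    rw [Finset.disjoint_left]
    intro z hz1 hz2
    rw [hΔdef, mem_Dset] at hz1
    rw [hNxdef, mem_Nset] at hz2
    exact hz2.2.2 hz1.2
  have hcard : d = 1 + (a + Nx.card) := by
    have := hreg x
    rw [SimpleGraph.degree, hΓx, Finset.card_insert_of_notMem hynot,
      Finset.card_union_of_disjoint hdisjΔNx, hcΔ] at this
    omega
  -- C3 : for z ∈ Δ, |Γz ∩ Nx| = |Γz ∩ Ny|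
  have hr_eq : ∀ z ∈ Δ, (G.neighborFinset z ∩ Nx).card = (G.neighborFinset z ∩ Ny).card := by
    intro z hz
    rw [hΔdef, mem_Dset] at hz
    have s1 : (G.neighborFinset z ∩ Dset G x y).card + (G.neighborFinset z ∩ Nset G y x).card
        = a - 1 := by
      apply count_split hxy hz.1.symm
      have := hA z y hz.2.symm
      omega
    have s2 : (G.neighborFinset z ∩ Dset G y x).card + (G.neighborFinset z ∩ Nset G x y).card
        = a - 1 := by
      apply count_split hxy.symm hz.2.symm
      have := hA z x hz.1.symm
      omega
    rw [← Dset_comm] at s2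
    rw [hNxdef, hNydef]
    omega
  -- C1 : for u ∈ Nx, |Γu ∩ Δ| + |Γu ∩ Ny| = a
  have hC1 : ∀ u ∈ Nx, (G.neighborFinset u ∩ Δ).card + (G.neighborFinset u ∩ Ny).card = a := by
    intro u hu
    rw [hNxdef, mem_Nset] at hu
    have hdist : G.dist u y = 2 := dist_two hu.1 hxy hu.2.1 (fun hc => hu.2.2 hc.symm)
    have hcup := hB u y hdist
    rw [hb] at hcup
    exact count_split hxy hu.1.symm hcup
  -- C2 : for v ∈ Ny, |Γv ∩ Δ| + |Γv ∩ Nx| = a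
  have hC2 : ∀ v ∈ Ny, (G.neighborFinset v ∩ Δ).card + (G.neighborFinset v ∩ Nx).card = a := by
    intro v hv
    rw [hNydef, mem_Nset] at hv
    have hdist : G.dist v x = 2 := dist_two hv.1 hxy.symm hv.2.1 (fun hc => hv.2.2 hc.symm)
    have hcup := hB v x hdist
    rw [hb] at hcup
    have := count_split hxy.symm hv.1.symm hcup
    rw [← Dset_comm] at this
    exact this
  -- r bounds
  have hrle : ∀ z ∈ Δ, (G.neighborFinset z ∩ Nx).card ≤ a := by
    intro z hz
    rw [hΔdef, mem_Dset] at hz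
    have hsub : G.neighborFinset z ∩ Nx ⊆ G.neighborFinset z ∩ G.neighborFinset x := by
      apply Finset.inter_subset_inter_left
      rw [hNxdef]; exact Finset.sdiff_subset
    calc (G.neighborFinset z ∩ Nx).card ≤ (G.neighborFinset z ∩ G.neighborFinset x).card :=
          Finset.card_le_card hsub
      _ = a := hA z x hz.1.symm
  have hr1 : ∀ z ∈ Δ, ∀ u ∈ Nx, G.Adj z u → 1 ≤ (G.neighborFinset z ∩ Nx).card := by
    intro z _ u hu hzu
    refine Finset.card_pos.mpr ⟨u, Finset.mem_inter.mpr ⟨?_, hu⟩⟩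
    rw [mem_neighborFinset]; exact hzu
  have hr1' : ∀ z ∈ Δ, ∀ v ∈ Ny, G.Adj z v → 1 ≤ (G.neighborFinset z ∩ Nx).card := by
    intro z hz v hv hzv
    rw [hr_eq z hz]
    refine Finset.card_pos.mpr ⟨v, Finset.mem_inter.mpr ⟨?_, hv⟩⟩
    rw [mem_neighborFinset]; exact hzv
  -- the transport plan
  set r : V → ℕ := fun z => (G.neighborFinset z ∩ Nx).card with hrdef
  set w : V → ℝ := fun z => 1 / ((a:ℝ) * (r z)) with hwdef
  have hwnn : ∀ z, 0 ≤ w z := by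
    intro z; rw [hwdef]; exact div_nonneg zero_le_one (mul_nonneg (Nat.cast_nonneg _) (Nat.cast_nonneg _))
  set T : V → V → ℝ := fun u v =>
    (if G.Adj u v then 1/(a:ℝ) else 0)
      + ∑ z ∈ Δ, (if G.Adj z u ∧ G.Adj z v then w z else 0) with hTdef
  have hTnn : ∀ u v, 0 ≤ T u v := by
    intro u v
    rw [hTdef]
    apply add_nonneg
    · split_ifs <;> positivity
    · apply Finset.sum_nonneg; intro z _; split_ifs
      · exact hwnn z
      · exact le_refl 0
  -- direct part row sums
  have hdir_row : ∀ u : V, ∑ v ∈ Ny, (if G.Adj u v then 1/(a:ℝ) else 0)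
      = ((G.neighborFinset u ∩ Ny).card : ℝ)/a := by
    intro u
    rw [card_inter_eq_sum Ny u, Finset.sum_div]
    apply Finset.sum_congr rfl; intro v _; split_ifs <;> simp
  have hdir_col : ∀ v : V, ∑ u ∈ Nx, (if G.Adj u v then 1/(a:ℝ) else 0)
      = ((G.neighborFinset v ∩ Nx).card : ℝ)/a := by
    intro v
    rw [card_inter_eq_sum Nx v, Finset.sum_div]
    apply Finset.sum_congr rfl; intro u _
    by_cases hadj : G.Adj u v
    · rw [if_pos hadj, if_pos hadj.symm]
    · rw [if_neg hadj, if_neg (fun hc => hadj hc.symm)]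
      simp
  -- relay part row sums
  have hrel_row : ∀ u ∈ Nx, ∑ v ∈ Ny, ∑ z ∈ Δ, (if G.Adj z u ∧ G.Adj z v then w z else 0)
      = ((G.neighborFinset u ∩ Δ).card : ℝ)/a := by
    intro u hu
    rw [Finset.sum_comm]
    have step1 : ∀ z ∈ Δ, ∑ v ∈ Ny, (if G.Adj z u ∧ G.Adj z v then w z else 0)
        = (if G.Adj z u then (1:ℝ)/a else 0) := by
      intro z hz
      by_cases hzu : G.Adj z u
      · simp only [hzu, true_and, if_pos]
        have hstep : ∑ v ∈ Ny, (if G.Adj z v then w z else 0)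
            = ((G.neighborFinset z ∩ Ny).card : ℝ) * w z := by
          rw [card_inter_eq_sum Ny z, Finset.sum_mul]
          apply Finset.sum_congr rfl; intro v _; split_ifs <;> simp
        rw [hstep, ← hr_eq z hz]
        have hr1z : 1 ≤ r z := hr1 z hz u hu hzu
        have hrzR : (0:ℝ) < (r z : ℝ) := by exact_mod_cast hr1z
        rw [hwdef]
        show ((r z : ℕ) : ℝ) * (1 / ((a:ℝ) * (r z))) = 1/(a:ℝ)
        field_simp
      · simp [hzu]
    rw [Finset.sum_congr rfl step1]
    have hflip : ∀ z, (if G.Adj z u then (1:ℝ)/a else 0) = (if G.Adj u z then (1:ℝ)/a else 0) := by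
      intro z
      by_cases hadj : G.Adj z u
      · rw [if_pos hadj, if_pos hadj.symm]
      · rw [if_neg hadj, if_neg (fun hc => hadj hc.symm)]
    rw [Finset.sum_congr rfl (fun z _ => hflip z), card_inter_eq_sum Δ u, Finset.sum_div]
    apply Finset.sum_congr rfl; intro z _; split_ifs <;> simp
  have hrel_col : ∀ v ∈ Ny, ∑ u ∈ Nx, ∑ z ∈ Δ, (if G.Adj z u ∧ G.Adj z v then w z else 0)
      = ((G.neighborFinset v ∩ Δ).card : ℝ)/a := by
    intro v hv
    rw [Finset.sum_comm]
    have step1 : ∀ z ∈ Δ, ∑ u ∈ Nx, (if G.Adj z u ∧ G.Adj z v then w z else 0)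
        = (if G.Adj z v then (1:ℝ)/a else 0) := by
      intro z hz
      by_cases hzv : G.Adj z v
      · simp only [hzv, and_true, if_pos]
        have hstep : ∑ u ∈ Nx, (if G.Adj z u then w z else 0)
            = ((G.neighborFinset z ∩ Nx).card : ℝ) * w z := by
          rw [card_inter_eq_sum Nx z, Finset.sum_mul]
          apply Finset.sum_congr rfl; intro u _; split_ifs <;> simp
        rw [hstep]
        have hr1z : 1 ≤ r z := hr1' z hz v hv hzv
        have hrzR : (0:ℝ) < (r z : ℝ) := by exact_mod_cast hr1z
        rw [hwdef]
        show ((r z : ℕ) : ℝ) * (1 / ((a:ℝ) * (r z))) = 1/(a:ℝ)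
        field_simp
      · simp [hzv]
    rw [Finset.sum_congr rfl step1]
    have hflip : ∀ z, (if G.Adj z v then (1:ℝ)/a else 0) = (if G.Adj v z then (1:ℝ)/a else 0) := by
      intro z
      by_cases hadj : G.Adj z v
      · rw [if_pos hadj, if_pos hadj.symm]
      · rw [if_neg hadj, if_neg (fun hc => hadj hc.symm)]
    rw [Finset.sum_congr rfl (fun z _ => hflip z), card_inter_eq_sum Δ v, Finset.sum_div]
    apply Finset.sum_congr rfl; intro z _; split_ifs <;> simp
  -- T row and column sums are 1
  have hrowT : ∀ u ∈ Nx, ∑ v ∈ Ny, T u v = 1 := by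
    intro u hu
    rw [hTdef]
    rw [Finset.sum_add_distrib, hdir_row u, hrel_row u hu]
    have hcast : ((G.neighborFinset u ∩ Ny).card : ℝ) + ((G.neighborFinset u ∩ Δ).card : ℝ)
        = (a : ℝ) := by
      exact_mod_cast (by have := hC1 u hu; omega :
        (G.neighborFinset u ∩ Ny).card + (G.neighborFinset u ∩ Δ).card = a)
    rw [← add_div, hcast, div_self (ne_of_gt haR)]
  have hcolT : ∀ v ∈ Ny, ∑ u ∈ Nx, T u v = 1 := by
    intro v hv
    rw [hTdef]
    rw [Finset.sum_add_distrib, hdir_col v, hrel_col v hv]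
    have hcast : ((G.neighborFinset v ∩ Nx).card : ℝ) + ((G.neighborFinset v ∩ Δ).card : ℝ)
        = (a : ℝ) := by
      exact_mod_cast (by have := hC2 v hv; omega :
        (G.neighborFinset v ∩ Nx).card + (G.neighborFinset v ∩ Δ).card = a)
    rw [← add_div, hcast, div_self (ne_of_gt haR)]
  -- the plan
  set pl : V → V → ℝ := fun u v =>
    (if u = v then (if u ∈ O then p else 0) else 0)
      + (if u ∈ Nx ∧ v ∈ Ny then p * T u v else 0) with hpldef
  -- membership facts
  have hxO : x ∈ O := by rw [hOdef]; exact Finset.mem_insert_self x _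
  have hyO : y ∈ O := by rw [hOdef]; exact Finset.mem_insert_of_mem (Finset.mem_insert_self y _)
  have hΔO : ∀ z ∈ Δ, z ∈ O := by
    intro z hz; rw [hOdef]; exact Finset.mem_insert_of_mem (Finset.mem_insert_of_mem hz)
  have hxNx : x ∉ Nx := by
    rw [hNxdef, mem_Nset]; rintro ⟨hc, -⟩; exact G.irrefl hc
  have hyNx : y ∉ Nx := by
    rw [hNxdef, mem_Nset]; rintro ⟨-, hc, -⟩; exact hc rfl
  have hyNy : y ∉ Ny := by
    rw [hNydef, mem_Nset]; rintro ⟨hc, -⟩; exact G.irrefl hc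
  have hxNy : x ∉ Ny := by
    rw [hNydef, mem_Nset]; rintro ⟨-, hc, -⟩; exact hc rfl
  have hΔNx : ∀ z ∈ Δ, z ∉ Nx := by
    intro z hz
    rw [hΔdef, mem_Dset] at hz
    rw [hNxdef, mem_Nset]; rintro ⟨-, -, hc⟩; exact hc hz.2
  have hΔNy : ∀ z ∈ Δ, z ∉ Ny := by
    intro z hz
    rw [hΔdef, mem_Dset] at hz
    rw [hNydef, mem_Nset]; rintro ⟨-, -, hc⟩; exact hc hz.1
  have hNxO : ∀ u ∈ Nx, u ∉ O := by
    intro u hu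
    rw [hNxdef, mem_Nset] at hu
    rw [hOdef]
    simp only [Finset.mem_insert, not_or]
    refine ⟨?_, ?_, ?_⟩
    · rintro rfl; exact G.irrefl hu.1
    · exact hu.2.1
    · rw [hΔdef, mem_Dset]; rintro ⟨-, hc⟩; exact hu.2.2 hc
  have hNyO : ∀ v ∈ Ny, v ∉ O := by
    intro v hv
    rw [hNydef, mem_Nset] at hv
    rw [hOdef]
    simp only [Finset.mem_insert, not_or]
    refine ⟨?_, ?_, ?_⟩
    · exact hv.2.1
    · rintro rfl; exact G.irrefl hv.1
    · rw [hΔdef, mem_Dset]; rintro ⟨hc, -⟩; exact hv.2.2 hc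
  have hdne : (d:ℝ) ≠ 0 := ne_of_gt hdR
  have hd1ne : (d:ℝ) + 1 ≠ 0 := ne_of_gt hd1R
  have hpp : (1 - p)/(d:ℝ) = p := by
    rw [hp]; field_simp; ring
  -- mu values
  have hmux : ∀ u, muMeasure G p x u = (if u ∈ O then p else 0) + (if u ∈ Nx then p else 0) := by
    intro u
    show (if u = x then p else if G.Adj x u then (1 - p) / (G.degree x : ℝ) else 0) = _
    by_cases h1 : u = x
    · subst h1; rw [if_pos rfl, if_pos hxO, if_neg hxNx]; ring
    · rw [if_neg h1]
      by_cases h2 : G.Adj x u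
      · rw [if_pos h2, hreg x, hpp]
        have humem : u ∈ insert y (Δ ∪ Nx) := by
          rw [← hΓx, mem_neighborFinset]; exact h2
        rcases Finset.mem_insert.mp humem with rfl | humem'
        · rw [if_pos hyO, if_neg hyNx]; ring
        · rcases Finset.mem_union.mp humem' with hΔu | hNxu
          · rw [if_pos (hΔO u hΔu), if_neg (hΔNx u hΔu)]; ring
          · rw [if_neg (hNxO u hNxu), if_pos hNxu]; ring
      · rw [if_neg h2]
        have huO : u ∉ O := by
          rw [hOdef]
          simp only [Finset.mem_insert, not_or]
          refine ⟨h1, ?_, ?_⟩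
          · rintro rfl; exact h2 hxy
          · rw [hΔdef, mem_Dset]; rintro ⟨hc, -⟩; exact h2 hc
        have huNx : u ∉ Nx := by
          rw [hNxdef, mem_Nset]; rintro ⟨hc, -⟩; exact h2 hc
        rw [if_neg huO, if_neg huNx]; ring
  have hmuy : ∀ v, muMeasure G p y v = (if v ∈ O then p else 0) + (if v ∈ Ny then p else 0) := by
    intro v
    show (if v = y then p else if G.Adj y v then (1 - p) / (G.degree y : ℝ) else 0) = _
    by_cases h1 : v = y
    · subst h1; rw [if_pos rfl, if_pos hyO, if_neg hyNy]; ring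
    · rw [if_neg h1]
      by_cases h2 : G.Adj y v
      · rw [if_pos h2, hreg y, hpp]
        have hvmem : v ∈ insert x (Δ ∪ Ny) := by
          rw [← hΓy, mem_neighborFinset]; exact h2
        rcases Finset.mem_insert.mp hvmem with rfl | hvmem'
        · rw [if_pos hxO, if_neg hxNy]; ring
        · rcases Finset.mem_union.mp hvmem' with hΔv | hNyv
          · rw [if_pos (hΔO v hΔv), if_neg (hΔNy v hΔv)]; ring
          · rw [if_neg (hNyO v hNyv), if_pos hNyv]; ring
      · rw [if_neg h2]
        have hvO : v ∉ O := by
          rw [hOdef]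
          simp only [Finset.mem_insert, not_or]
          refine ⟨?_, h1, ?_⟩
          · rintro rfl; exact h2 hxy.symm
          · rw [hΔdef, mem_Dset]; rintro ⟨-, hc⟩; exact h2 hc
        have hvNy : v ∉ Ny := by
          rw [hNydef, mem_Nset]; rintro ⟨hc, -⟩; exact h2 hc
        rw [if_neg hvO, if_neg hvNy]; ring
  -- transport plan property
  have hplan : IsTransportPlan (muMeasure G p x) (muMeasure G p y) pl := by
    refine ⟨?_, ?_, ?_⟩
    · intro u v
      rw [hpldef]
      apply add_nonneg
      · split_ifs <;> first | exact le_of_lt hp0 | exact le_refl 0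
      · split_ifs
        · exact mul_nonneg (le_of_lt hp0) (hTnn u v)
        · exact le_refl 0
    · intro u
      rw [hmux u]
      rw [hpldef]
      rw [Finset.sum_add_distrib]
      congr 1
      · exact Fintype.sum_ite_eq u (fun _ => if u ∈ O then p else 0)
      · by_cases hu : u ∈ Nx
        · rw [if_pos hu]
          simp only [hu, true_and]
          rw [Fintype.sum_ite_mem, ← Finset.mul_sum, hrowT u hu, mul_one]
        · rw [if_neg hu]
          simp only [hu, false_and, if_false]
          exact Finset.sum_const_zero
    · intro v
      rw [hmuy v]
      rw [hpldef]
      rw [Finset.sum_add_distrib]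
      congr 1
      · exact Fintype.sum_ite_eq' v (fun u => if u ∈ O then p else 0)
      · by_cases hv : v ∈ Ny
        · rw [if_pos hv]
          simp only [hv, and_true]
          rw [Fintype.sum_ite_mem, ← Finset.mul_sum, hcolT v hv, mul_one]
        · rw [if_neg hv]
          simp only [hv, and_false, if_false]
          exact Finset.sum_const_zero
  -- rewrite the cost
  have hcost_eq : ∑ u, ∑ v, (G.dist u v : ℝ) * pl u v
      = ∑ u ∈ Nx, ∑ v ∈ Ny, (G.dist u v : ℝ) * (p * T u v) := by
    have hterm : ∀ u v : V, (G.dist u v : ℝ) * pl u v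
        = (if u ∈ Nx then (if v ∈ Ny then (G.dist u v : ℝ) * (p * T u v) else 0) else 0) := by
      intro u v
      rw [hpldef]
      show (G.dist u v : ℝ) * ((if u = v then (if u ∈ O then p else 0) else 0)
        + (if u ∈ Nx ∧ v ∈ Ny then p * T u v else 0)) = _
      rw [mul_add]
      have h1 : (G.dist u v : ℝ) * (if u = v then (if u ∈ O then p else 0) else 0) = 0 := by
        by_cases huv : u = v
        · subst huv; rw [SimpleGraph.dist_self]; norm_num
        · rw [if_neg huv, mul_zero]
      rw [h1, zero_add]
      by_cases hu : u ∈ Nx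
      · by_cases hv : v ∈ Ny
        · rw [if_pos ⟨hu, hv⟩, if_pos hu, if_pos hv]
        · rw [if_neg (fun hc => hv hc.2), if_pos hu, if_neg hv, mul_zero]
      · rw [if_neg (fun hc => hu hc.1), if_neg hu, mul_zero]
    calc ∑ u, ∑ v, (G.dist u v : ℝ) * pl u v
        = ∑ u, (if u ∈ Nx then ∑ v, (if v ∈ Ny then (G.dist u v : ℝ) * (p * T u v) else 0) else 0) := by
          apply Finset.sum_congr rfl; intro u _
          rw [Finset.sum_congr rfl (fun v _ => hterm u v)]
          by_cases hu : u ∈ Nx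
          · simp only [hu, if_true]
          · simp only [hu, if_false]; simp
      _ = ∑ u ∈ Nx, ∑ v, (if v ∈ Ny then (G.dist u v : ℝ) * (p * T u v) else 0) :=
          Fintype.sum_ite_mem _ _
      _ = ∑ u ∈ Nx, ∑ v ∈ Ny, (G.dist u v : ℝ) * (p * T u v) := by
          apply Finset.sum_congr rfl; intro u _; exact Fintype.sum_ite_mem _ _
  -- per-u upper bound
  have hub : ∀ u ∈ Nx, ∑ v ∈ Ny, (G.dist u v : ℝ) * (p * T u v)
      ≤ p * (1 + ((G.neighborFinset u ∩ Δ).card : ℝ)/a) := by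
    intro u hu
    have hbound : ∀ v ∈ Ny, (G.dist u v : ℝ) * T u v
        ≤ (if G.Adj u v then 1/(a:ℝ) else 0)
          + 2 * ∑ z ∈ Δ, (if G.Adj z u ∧ G.Adj z v then w z else 0) := by
      intro v hv
      have hBnn : 0 ≤ ∑ z ∈ Δ, (if G.Adj z u ∧ G.Adj z v then w z else 0) :=
        Finset.sum_nonneg (fun z _ => by split_ifs; exacts [hwnn z, le_refl 0])
      have hAle : (G.dist u v : ℝ) * (if G.Adj u v then 1/(a:ℝ) else 0)
          ≤ (if G.Adj u v then 1/(a:ℝ) else 0) := by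
        by_cases hadj : G.Adj u v
        · have hd1 : G.dist u v = 1 := SimpleGraph.dist_eq_one_iff_adj.mpr hadj
          rw [hd1]; norm_num
        · rw [if_neg hadj, mul_zero]
      have hBle : (G.dist u v : ℝ) * ∑ z ∈ Δ, (if G.Adj z u ∧ G.Adj z v then w z else 0)
          ≤ 2 * ∑ z ∈ Δ, (if G.Adj z u ∧ G.Adj z v then w z else 0) := by
        by_cases hex : ∃ z ∈ Δ, G.Adj z u ∧ G.Adj z v
        · obtain ⟨z, hz, hzu, hzv⟩ := hex
          have hd2 : G.dist u v ≤ 2 := by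
            simpa using G.dist_le
              (SimpleGraph.Walk.cons hzu.symm (SimpleGraph.Walk.cons hzv SimpleGraph.Walk.nil))
          have hd2R : (G.dist u v : ℝ) ≤ 2 := by exact_mod_cast hd2
          exact mul_le_mul_of_nonneg_right hd2R hBnn
        · simp only [not_exists, not_and] at hex
          have hB0 : ∑ z ∈ Δ, (if G.Adj z u ∧ G.Adj z v then w z else 0) = 0 :=
            Finset.sum_eq_zero (fun z hz => by
              rw [if_neg]; rintro ⟨hc1, hc2⟩; exact hex z hz hc1 hc2)
          rw [hB0, mul_zero, mul_zero]
      calc (G.dist u v : ℝ) * T u v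
          = (G.dist u v : ℝ) * (if G.Adj u v then 1/(a:ℝ) else 0)
            + (G.dist u v : ℝ) * ∑ z ∈ Δ, (if G.Adj z u ∧ G.Adj z v then w z else 0) := by
            rw [hTdef]; ring
        _ ≤ _ := add_le_add hAle hBle
    have hfin : ((G.neighborFinset u ∩ Ny).card : ℝ)/a
        + 2 * (((G.neighborFinset u ∩ Δ).card : ℝ)/a)
        = 1 + ((G.neighborFinset u ∩ Δ).card : ℝ)/a := by
      have hcast : ((G.neighborFinset u ∩ Ny).card : ℝ) + ((G.neighborFinset u ∩ Δ).card : ℝ)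
          = (a : ℝ) := by
        exact_mod_cast (by have := hC1 u hu; omega :
          (G.neighborFinset u ∩ Ny).card + (G.neighborFinset u ∩ Δ).card = a)
      field_simp
      linarith
    calc ∑ v ∈ Ny, (G.dist u v : ℝ) * (p * T u v)
        = p * ∑ v ∈ Ny, (G.dist u v : ℝ) * T u v := by
          rw [Finset.mul_sum]; apply Finset.sum_congr rfl; intro v _; ring
      _ ≤ p * ∑ v ∈ Ny, ((if G.Adj u v then 1/(a:ℝ) else 0)
            + 2 * ∑ z ∈ Δ, (if G.Adj z u ∧ G.Adj z v then w z else 0)) :=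
          mul_le_mul_of_nonneg_left (Finset.sum_le_sum hbound) (le_of_lt hp0)
      _ = p * (((G.neighborFinset u ∩ Ny).card : ℝ)/a
            + 2 * (((G.neighborFinset u ∩ Δ).card : ℝ)/a)) := by
          rw [Finset.sum_add_distrib, hdir_row u, ← Finset.mul_sum, hrel_row u hu]
      _ = p * (1 + ((G.neighborFinset u ∩ Δ).card : ℝ)/a) := by rw [hfin]
  -- double counting
  have hswap : ∑ u ∈ Nx, ((G.neighborFinset u ∩ Δ).card : ℝ)
      = ∑ z ∈ Δ, ((G.neighborFinset z ∩ Nx).card : ℝ) := by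
    rw [Finset.sum_congr rfl (fun u _ => card_inter_eq_sum Δ u),
      Finset.sum_congr rfl (fun z (_ : z ∈ Δ) => card_inter_eq_sum Nx z), Finset.sum_comm]
    apply Finset.sum_congr rfl; intro z _
    apply Finset.sum_congr rfl; intro u _
    by_cases hadj : G.Adj u z
    · rw [if_pos hadj, if_pos hadj.symm]
    · rw [if_neg hadj, if_neg (fun hc => hadj hc.symm)]
  have hΔsum : ∑ u ∈ Nx, ((G.neighborFinset u ∩ Δ).card : ℝ) ≤ (a:ℝ) * a := by
    rw [hswap]
    calc ∑ z ∈ Δ, ((G.neighborFinset z ∩ Nx).card : ℝ) ≤ ∑ z ∈ Δ, (a:ℝ) :=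
          Finset.sum_le_sum (fun z hz => by exact_mod_cast hrle z hz)
      _ = (Δ.card : ℝ) * a := by rw [Finset.sum_const, nsmul_eq_mul]
      _ = (a:ℝ) * a := by rw [hcΔ]
  -- total cost bound
  have hane : (a:ℝ) ≠ 0 := ne_of_gt haR
  have hmda : (Nx.card : ℝ) + a = (d:ℝ) - 1 := by
    have : (d:ℝ) = 1 + ((a:ℝ) + (Nx.card : ℝ)) := by exact_mod_cast hcard
    linarith
  have hcost_le : ∑ u, ∑ v, (G.dist u v : ℝ) * pl u v ≤ p * ((d:ℝ) - 1) := by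
    rw [hcost_eq]
    calc ∑ u ∈ Nx, ∑ v ∈ Ny, (G.dist u v : ℝ) * (p * T u v)
        ≤ ∑ u ∈ Nx, p * (1 + ((G.neighborFinset u ∩ Δ).card : ℝ)/a) :=
          Finset.sum_le_sum hub
      _ = p * ((Nx.card : ℝ) + (∑ u ∈ Nx, ((G.neighborFinset u ∩ Δ).card : ℝ))/a) := by
          rw [← Finset.mul_sum, Finset.sum_add_distrib, Finset.sum_const, Finset.sum_div]
          simp [Finset.sum_div]
      _ ≤ p * ((Nx.card : ℝ) + a) := by
          apply mul_le_mul_of_nonneg_left _ (le_of_lt hp0)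
          have : (∑ u ∈ Nx, ((G.neighborFinset u ∩ Δ).card : ℝ))/a ≤ a := by
            rw [div_le_iff₀ haR]
            exact hΔsum
          linarith
      _ = p * ((d:ℝ) - 1) := by rw [hmda]
  -- conclude
  have hW : W1 G (muMeasure G p x) (muMeasure G p y) ≤ p * ((d:ℝ) - 1) :=
    le_trans (W1_le_cost hplan) hcost_le
  unfold kappaLLY
  rw [← hp]
  have h2 : 2/((d:ℝ)+1) ≤ 1 - W1 G (muMeasure G p x) (muMeasure G p y) := by
    have hpd : p * ((d:ℝ) - 1) = 1 - 2/((d:ℝ)+1) := by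
      rw [hp]; field_simp; ring
    linarith [hW]
  calc (2:ℝ)/d = (((d:ℝ)+1)/d) * (2/((d:ℝ)+1)) := by field_simp
    _ ≤ (((d:ℝ)+1)/d) * (1 - W1 G (muMeasure G p x) (muMeasure G p y)) := by
        apply mul_le_mul_of_nonneg_left h2
        positivity
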